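/- For 0 < α < 1 and λ ≥ 0, the function x ↦ (α/Γ(1−α)) x^{−1−α}(1 − e^{−x}) on (0,∞) is a probability density, and its Laplace transform equals (1+λ)^α − λ^α: ∫₀^∞ e^{−λx} (α/Γ(1−α)) x^{−1−α} (1 − e^{−x}) dx = (1+λ)^α − λ^α. -/

import Mathlib

open MeasureTheory Set Real Filter

private lemma one_sub_exp_neg_le (t : ℝ) : 1 - Real.exp (-t) ≤ t := by
  have := Real.add_one_le_exp (-t)
  linarith

private lemma one_sub_exp_neg_nonneg {t : ℝ} (ht : 0 ≤ t) : 0 ≤ 1 - Real.exp (-t) := by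
  have : Real.exp (-t) ≤ 1 := Real.exp_le_one_iff.mpr (by linarith)
  linarith

private lemma one_sub_exp_neg_le_one {t : ℝ} (ht : 0 ≤ t) : 1 - Real.exp (-t) ≤ 1 := by
  have : 0 < Real.exp (-t) := Real.exp_pos _
  linarith

/-- Integrability of `(1 - e^{-cx}) x^{-1-α}` on `(0,∞)`. -/
private lemma int_g {α : ℝ} (hα0 : 0 < α) (hα1 : α < 1) {c : ℝ} (hc : 0 ≤ c) :
    IntegrableOn (fun x : ℝ => (1 - Real.exp (-(c * x))) * x ^ (-1 - α)) (Ioi 0) := by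
  have hmeas : AEStronglyMeasurable
      (fun x : ℝ => (1 - Real.exp (-(c * x))) * x ^ (-1 - α)) (volume.restrict (Ioi (0:ℝ))) := by
    refine ContinuousOn.aestronglyMeasurable ?_ measurableSet_Ioi
    exact ((continuous_const.sub ((continuous_const.mul continuous_id).neg.rexp)).continuousOn).mul
      (continuousOn_id.rpow_const (fun x hx => Or.inl (ne_of_gt hx)))
  have h01 : IntegrableOn (fun x : ℝ => (1 - Real.exp (-(c * x))) * x ^ (-1 - α)) (Ioc 0 1) := by
    have hmaj : IntegrableOn (fun x : ℝ => c * x ^ (-α)) (Ioc (0:ℝ) 1) := by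
      have := (intervalIntegral.intervalIntegrable_rpow' (a := (0:ℝ)) (b := 1) (r := -α) (by linarith)).1
      exact this.const_mul c
    refine hmaj.integrable.mono' (hmeas.mono_measure
      (Measure.restrict_mono Ioc_subset_Ioi_self le_rfl)) ?_
    refine (ae_restrict_iff' measurableSet_Ioc).2 (ae_of_all _ (fun x hx => ?_))
    have hx0 : 0 < x := hx.1
    have hrp : (0:ℝ) ≤ x ^ (-1 - α) := Real.rpow_nonneg hx0.le _
    have hcx : 0 ≤ c * x := mul_nonneg hc hx0.le
    rw [Real.norm_eq_abs, abs_of_nonneg (mul_nonneg (one_sub_exp_neg_nonneg hcx) hrp)]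
    have h1 : (1 - Real.exp (-(c * x))) * x ^ (-1 - α) ≤ (c * x) * x ^ (-1 - α) :=
      mul_le_mul_of_nonneg_right (one_sub_exp_neg_le _) hrp
    have h2 : x * x ^ (-1 - α) = x ^ (-α) := by
      have := Real.rpow_add hx0 1 (-1 - α)
      rw [Real.rpow_one] at this
      rw [← this]; congr 1; ring
    calc (1 - Real.exp (-(c * x))) * x ^ (-1 - α) ≤ (c * x) * x ^ (-1 - α) := h1
      _ = c * (x * x ^ (-1 - α)) := by ring
      _ = c * x ^ (-α) := by rw [h2]
  have h1i : IntegrableOn (fun x : ℝ => (1 - Real.exp (-(c * x))) * x ^ (-1 - α)) (Ioi 1) := by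
    have hmaj : IntegrableOn (fun x : ℝ => x ^ (-1 - α)) (Ioi (1:ℝ)) :=
      integrableOn_Ioi_rpow_of_lt (by linarith) one_pos
    refine hmaj.integrable.mono' (hmeas.mono_measure
      (Measure.restrict_mono (Ioi_subset_Ioi zero_le_one) le_rfl)) ?_
    refine (ae_restrict_iff' measurableSet_Ioi).2 (ae_of_all _ (fun x hx => ?_))
    have hx0 : (0:ℝ) < x := lt_trans one_pos hx
    have hrp : (0:ℝ) ≤ x ^ (-1 - α) := Real.rpow_nonneg hx0.le _
    have hcx : 0 ≤ c * x := mul_nonneg hc hx0.le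
    rw [Real.norm_eq_abs, abs_of_nonneg (mul_nonneg (one_sub_exp_neg_nonneg hcx) hrp)]
    calc (1 - Real.exp (-(c * x))) * x ^ (-1 - α) ≤ 1 * x ^ (-1 - α) :=
      mul_le_mul_of_nonneg_right (one_sub_exp_neg_le_one hcx) hrp
      _ = x ^ (-1 - α) := one_mul _
  have : Ioc (0:ℝ) 1 ∪ Ioi 1 = Ioi 0 := Ioc_union_Ioi_eq_Ioi zero_le_one
  rw [← this]
  exact h01.union h1i

/-- Integrability of `e^{-cx} x^{-α}` on `(0,∞)` for `c > 0`. -/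
private lemma int_h {α : ℝ} (hα1 : α < 1) {c : ℝ} (hc : 0 < c) :
    IntegrableOn (fun x : ℝ => Real.exp (-(c * x)) * x ^ (-α)) (Ioi 0) := by
  have := integrableOn_rpow_mul_exp_neg_mul_rpow (p := 1) (s := -α) (b := c)
    (by linarith) one_pos hc
  refine this.congr_fun (fun x hx => ?_) measurableSet_Ioi
  simp only [Real.rpow_one]
  ring_nf

/-- The key fractional integral. -/
private lemma key_integral {α : ℝ} (hα0 : 0 < α) (hα1 : α < 1) {c : ℝ} (hc : 0 ≤ c) :
    ∫ x in Ioi (0:ℝ), (1 - Real.exp (-(c * x))) * x ^ (-1 - α)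
      = c ^ α * Real.Gamma (1 - α) / α := by
  rcases eq_or_lt_of_le hc with rfl | hc
  · simp [Real.zero_rpow (ne_of_gt hα0)]
  -- c > 0 case
  set F : ℝ → ℝ := fun x => -(1/α) * ((1 - Real.exp (-(c * x))) * x ^ (-α)) with hF
  set g : ℝ → ℝ := fun x => (1 - Real.exp (-(c * x))) * x ^ (-1 - α) with hg
  set h : ℝ → ℝ := fun x => (c/α) * (Real.exp (-(c * x)) * x ^ (-α)) with hh
  have hgi := int_g hα0 hα1 hc.le
  have hhi := (int_h hα1 hc).const_mul (c/α)
  have hderiv : ∀ x ∈ Ioi (0:ℝ), HasDerivAt F (g x - h x) x := by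
    intro x hx
    have hx0 : (0:ℝ) < x := hx
    have hu : HasDerivAt (fun x : ℝ => 1 - Real.exp (-(c * x))) (c * Real.exp (-(c * x))) x := by
      have h1 : HasDerivAt (fun x : ℝ => -(c * x)) (-c) x := by
        simpa [Pi.neg_def] using ((hasDerivAt_id x).const_mul c).neg
      have := h1.exp
      simpa [mul_comm, Pi.sub_def] using (hasDerivAt_const x (1:ℝ)).sub this
    have hv : HasDerivAt (fun x : ℝ => x ^ (-α)) (-α * x ^ (-α - 1)) x :=
      Real.hasDerivAt_rpow_const (Or.inl (ne_of_gt hx0))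
    have := (hu.mul hv).const_mul (-(1/α))
    refine this.congr_deriv ?_
    have hexp : x ^ (-α - 1) = x ^ (-1 - α) := by ring_nf
    rw [hg, hh, hexp]
    field_simp
    ring
  have hcont : ContinuousWithinAt F (Ici 0) 0 := by
    have hF0 : F 0 = 0 := by simp [hF]
    unfold ContinuousWithinAt
    rw [hF0]
    have hb : Tendsto (fun x : ℝ => (c/α) * x ^ (1 - α)) (nhdsWithin 0 (Ici 0)) (nhds 0) := by
      have hcont2 : ContinuousAt (fun x : ℝ => x ^ (1 - α)) 0 :=
        Real.continuousAt_rpow_const 0 (1 - α) (Or.inr (by linarith))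
      have := (hcont2.continuousWithinAt (s := Ici 0)).tendsto
      rw [Real.zero_rpow (by linarith : (1:ℝ) - α ≠ 0)] at this
      simpa using this.const_mul (c/α)
    refine squeeze_zero_norm' ?_ hb
    filter_upwards [self_mem_nhdsWithin] with x hx
    rcases eq_or_lt_of_le (Set.mem_Ici.mp hx) with rfl | hx0
    · simp [hF, Real.zero_rpow (by linarith : (1:ℝ) - α ≠ 0)]
    · have hcx : 0 ≤ c * x := mul_nonneg hc.le hx0.le
      have hrp : (0:ℝ) ≤ x ^ (-α) := Real.rpow_nonneg hx0.le _
      rw [hF, Real.norm_eq_abs, abs_mul, abs_mul]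
      rw [abs_of_nonneg (one_sub_exp_neg_nonneg hcx), abs_of_nonneg hrp]
      have h2 : x * x ^ (-α) = x ^ (1 - α) := by
        have := Real.rpow_add hx0 1 (-α)
        rw [Real.rpow_one] at this
        rw [← this, ← sub_eq_add_neg]
      have habs : |(-(1/α))| = 1/α := by
        rw [abs_neg, abs_of_pos (by positivity)]
      rw [habs]
      calc 1/α * ((1 - Real.exp (-(c * x))) * x ^ (-α))
          ≤ 1/α * ((c * x) * x ^ (-α)) := by
            apply mul_le_mul_of_nonneg_left
              (mul_le_mul_of_nonneg_right (one_sub_exp_neg_le _) hrp) (by positivity)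
        _ = (c/α) * (x * x ^ (-α)) := by ring
        _ = (c/α) * x ^ (1 - α) := by rw [h2]
  have htop : Tendsto F atTop (nhds 0) := by
    have hb : Tendsto (fun x : ℝ => (1/α) * x ^ (-α)) atTop (nhds 0) := by
      simpa using (tendsto_rpow_neg_atTop hα0).const_mul (1/α)
    refine squeeze_zero_norm' ?_ hb
    filter_upwards [eventually_gt_atTop (0:ℝ)] with x hx0
    have hcx : 0 ≤ c * x := mul_nonneg hc.le hx0.le
    have hrp : (0:ℝ) ≤ x ^ (-α) := Real.rpow_nonneg hx0.le _
    rw [hF, Real.norm_eq_abs, abs_mul, abs_mul]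
    rw [abs_of_nonneg (one_sub_exp_neg_nonneg hcx), abs_of_nonneg hrp,
      abs_neg, abs_of_pos (by positivity : (0:ℝ) < 1/α)]
    calc 1/α * ((1 - Real.exp (-(c * x))) * x ^ (-α))
        ≤ 1/α * (1 * x ^ (-α)) := by
          apply mul_le_mul_of_nonneg_left
            (mul_le_mul_of_nonneg_right (one_sub_exp_neg_le_one hcx) hrp) (by positivity)
      _ = 1/α * x ^ (-α) := by ring
  have hFTC := integral_Ioi_of_hasDerivAt_of_tendsto hcont hderiv (hgi.sub hhi) htop
  have hF0 : F 0 = 0 := by simp [hF]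
  rw [hF0, sub_zero] at hFTC
  have hsub : ∫ x in Ioi (0:ℝ), (g x - h x) = (∫ x in Ioi (0:ℝ), g x) - ∫ x in Ioi (0:ℝ), h x :=
    integral_sub hgi hhi
  rw [hsub] at hFTC
  have hval : ∫ x in Ioi (0:ℝ), h x = c ^ α * Real.Gamma (1 - α) / α := by
    rw [hh]
    rw [MeasureTheory.integral_const_mul]
    have heq : ∫ x in Ioi (0:ℝ), Real.exp (-(c * x)) * x ^ (-α)
        = ∫ x in Ioi (0:ℝ), x ^ ((1 - α) - 1) * Real.exp (-(c * x)) := by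
      refine setIntegral_congr_fun measurableSet_Ioi (fun x hx => ?_)
      norm_num [mul_comm]
    rw [heq, integral_rpow_mul_exp_neg_mul_Ioi (by linarith : (0:ℝ) < 1 - α) hc]
    rw [one_div, Real.inv_rpow hc.le, ← Real.rpow_neg hc.le]
    have : c / α * (c ^ (-(1 - α)) * Real.Gamma (1 - α))
        = (c * c ^ (-(1-α))) * Real.Gamma (1 - α) / α := by ring
    rw [this]
    congr 2
    have := Real.rpow_add hc 1 (-(1 - α))
    rw [Real.rpow_one] at this
    rw [← this]; congr 1; ring
  have : (∫ x in Ioi (0:ℝ), g x) = ∫ x in Ioi (0:ℝ), h x := by linarith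
  rw [hg] at this
  rw [this, hval]

theorem density_excursion_length (α : ℝ) (hα0 : 0 < α) (hα1 : α < 1) :
    (∫ x in Ioi (0:ℝ),
        (α / Real.Gamma (1 - α)) * x ^ (-1 - α) * (1 - Real.exp (-x)) = 1) ∧
    (∀ l : ℝ, 0 ≤ l →
      ∫ x in Ioi (0:ℝ), Real.exp (-(l * x)) *
          ((α / Real.Gamma (1 - α)) * x ^ (-1 - α) * (1 - Real.exp (-x)))
        = (1 + l) ^ α - l ^ α) := by
  have hΓ : 0 < Real.Gamma (1 - α) := Real.Gamma_pos_of_pos (by linarith)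
  set K : ℝ := α / Real.Gamma (1 - α) with hK
  have hKΓ : K * (Real.Gamma (1 - α) / α) = 1 := by
    rw [hK]; field_simp
  constructor
  · have heq : ∫ x in Ioi (0:ℝ), K * x ^ (-1 - α) * (1 - Real.exp (-x))
        = ∫ x in Ioi (0:ℝ), K * ((1 - Real.exp (-(1 * x))) * x ^ (-1 - α)) := by
      refine setIntegral_congr_fun measurableSet_Ioi (fun x hx => ?_)
      rw [one_mul]; ring
    rw [heq, MeasureTheory.integral_const_mul, key_integral hα0 hα1 (zero_le_one)]
    rw [Real.one_rpow, one_mul, hKΓ]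
  · intro l hl
    have hexp : ∀ x : ℝ, Real.exp (-(l * x)) * (K * x ^ (-1 - α) * (1 - Real.exp (-x)))
        = K * ((1 - Real.exp (-((1 + l) * x))) * x ^ (-1 - α)
              - (1 - Real.exp (-(l * x))) * x ^ (-1 - α)) := by
      intro x
      have : Real.exp (-((1 + l) * x)) = Real.exp (-(l * x)) * Real.exp (-x) := by
        rw [← Real.exp_add]; ring_nf
      rw [this]; ring
    rw [MeasureTheory.integral_congr_ae (ae_of_all _ hexp)]
    rw [MeasureTheory.integral_const_mul,
      integral_sub (int_g hα0 hα1 (by linarith : (0:ℝ) ≤ 1 + l)) (int_g hα0 hα1 hl),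
      key_integral hα0 hα1 (by linarith : (0:ℝ) ≤ 1 + l), key_integral hα0 hα1 hl]
    field_simp [hK]
    rw [hK, div_mul_cancel₀ α hΓ.ne']
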